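/- There exists a positive integer m such that the congruence 2^n - 3^k ≡ 1 (mod m) has exactly the same solutions in non-negative integers (n, k) as the equation 2^n - 3^k = 1, namely {(1, 0), (2, 1)}. -/
import Mathlib

lemma pow_mod_cycle {m : ℕ} (a : ZMod m) (c : ℕ) (h : a ^ c = 1) (k : ℕ) :
    a ^ k = a ^ (k % c) := by
  conv_lhs => rw [← Nat.mod_add_div k c]
  rw [pow_add, pow_mul, h, one_pow, mul_one]

lemma key (n k : ℕ) (h : (72 : ℤ) ∣ 2 ^ n - 3 ^ k - 1) :
    (n = 1 ∧ k = 0) ∨ (n = 2 ∧ k = 1) := by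
  have h8 : (8 : ℤ) ∣ 2 ^ n - 3 ^ k - 1 := dvd_trans (by norm_num) h
  have h9 : (9 : ℤ) ∣ 2 ^ n - 3 ^ k - 1 := dvd_trans (by norm_num) h
  have e8 : (2 : ZMod 8) ^ n - 3 ^ k - 1 = 0 := by
    have := (ZMod.intCast_zmod_eq_zero_iff_dvd (2 ^ n - 3 ^ k - 1) 8).2 h8
    push_cast at this; exact this
  have e9 : (2 : ZMod 9) ^ n - 3 ^ k - 1 = 0 := by
    have := (ZMod.intCast_zmod_eq_zero_iff_dvd (2 ^ n - 3 ^ k - 1) 9).2 h9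
    push_cast at this; exact this
  rw [pow_mod_cycle (3 : ZMod 8) 2 (by decide) k] at e8
  have hk2 : k % 2 = 0 ∨ k % 2 = 1 := Nat.mod_two_eq_zero_or_one k
  -- analyze mod 8 to pin down n and the parity of k
  match n with
  | 0 =>
    exfalso
    rcases hk2 with hk | hk <;> rw [hk] at e8 <;> revert e8 <;> decide
  | 1 =>
    -- need k even, then mod 9 gives k = 0
    rcases hk2 with hk | hk
    · left
      refine ⟨rfl, ?_⟩
      match k with
      | 0 => rfl
      | 1 => simp at hk
      | j + 2 =>
        exfalso
        rw [pow_add] at e9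
        have h32 : (3 : ZMod 9) ^ j * (3 : ZMod 9) ^ 2 = 0 := by
          rw [show ((3 : ZMod 9) ^ 2) = 0 from by decide, mul_zero]
        rw [h32] at e9
        revert e9; decide
    · exfalso; rw [hk] at e8; revert e8; decide
  | 2 =>
    rcases hk2 with hk | hk
    · exfalso; rw [hk] at e8; revert e8; decide
    · right
      refine ⟨rfl, ?_⟩
      match k with
      | 0 => simp at hk
      | 1 => rfl
      | j + 2 =>
        exfalso
        rw [pow_add] at e9
        have h32 : (3 : ZMod 9) ^ j * (3 : ZMod 9) ^ 2 = 0 := by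
          rw [show ((3 : ZMod 9) ^ 2) = 0 from by decide, mul_zero]
        rw [h32] at e9
        revert e9; decide
  | m + 3 =>
    exfalso
    rw [pow_add, show ((2 : ZMod 8) ^ 3) = 0 from by decide, mul_zero] at e8
    rcases hk2 with hk | hk <;> rw [hk] at e8 <;> revert e8 <;> decide

theorem skolem_two_three :
    ∃ m : ℕ, 0 < m ∧
      (∀ n k : ℕ, ((m : ℤ) ∣ 2 ^ n - 3 ^ k - 1 ↔ (2:ℤ) ^ n - 3 ^ k = 1)) ∧
      (∀ n k : ℕ, (2:ℤ) ^ n - 3 ^ k = 1 ↔ (n = 1 ∧ k = 0) ∨ (n = 2 ∧ k = 1)) := by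
  refine ⟨72, by norm_num, ?_, ?_⟩
  · intro n k
    constructor
    · intro h
      rcases key n k h with ⟨hn, hk⟩ | ⟨hn, hk⟩ <;> subst hn <;> subst hk <;> norm_num
    · intro h
      rw [sub_eq_zero_of_eq h]
      exact dvd_zero _
  · intro n k
    constructor
    · intro h
      exact key n k (by rw [sub_eq_zero_of_eq h]; exact dvd_zero _)
    · rintro (⟨hn, hk⟩ | ⟨hn, hk⟩) <;> subst hn <;> subst hk <;> norm_num
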